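/- Let X, Y be vector spaces in separating duality, with X given the weak topology σ(X,Y). Let f : X → (−∞,+∞] be a lower semicontinuous convex function whose effective domain is contained in a compact set, and let V ⊆ X be a closed convex set with V ∩ dom f ≠ ∅ and inf_{x∈V} f(x) < +∞. Then inf_{x∈V} f(x) = −inf_{y∈Y} (f*(y) + ξ_V*(−y)), where f* is the convex conjugate of f and ξ_V*(y) = sup_{x∈V} ⟨x,y⟩ is the support function of V. -/

import Mathlib

open scoped ENNReal

open Filter Topology Set

open Filter Topology Set

theorem weakBilin_dual {X Y : Type*} [AddCommGroup X] [Module ℝ X] [AddCommGroup Y] [Module ℝ Y]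
    (B : X →ₗ[ℝ] Y →ₗ[ℝ] ℝ) (φ : WeakBilin B →L[ℝ] ℝ) :
    ∃ y : Y, ∀ z : WeakBilin B, φ z = B z y := by
  -- continuity at 0 gives a basic neighborhood
  have hcont : φ ⁻¹' Set.Ioo (-1 : ℝ) 1 ∈ 𝓝 (0 : WeakBilin B) := by
    have : Set.Ioo (-1 : ℝ) 1 ∈ 𝓝 (φ 0) := by
      rw [map_zero]
      exact Ioo_mem_nhds (by norm_num) (by norm_num)
    exact φ.continuous.continuousAt.preimage_mem_nhds this
  obtain ⟨U, hU, hUsub⟩ := (B.hasBasis_weakBilin).mem_iff.mp hcont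
  obtain ⟨s, r, hr, rfl⟩ := SeminormFamily.basisSets_iff _ |>.mp hU
  -- kernel condition
  let ψ : X →ₗ[ℝ] ℝ :=
    { toFun := fun x => φ x
      map_add' := fun a b => φ.map_add a b
      map_smul' := fun c a => φ.map_smul c a }
  have hker : (⨅ i : s, LinearMap.ker (B.flip (i : Y))) ≤ LinearMap.ker ψ := by
    intro x hx
    simp only [Submodule.mem_iInf, LinearMap.mem_ker, LinearMap.flip_apply] at hx
    have hx0 : ∀ t : ℝ, (t • x : WeakBilin B) ∈ (s.sup B.toSeminormFamily).ball 0 r := by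
      intro t
      rw [Seminorm.mem_ball_zero]
      have : (s.sup B.toSeminormFamily) (t • x) = 0 := by
        apply le_antisymm _ (apply_nonneg _ _)
        apply Seminorm.finset_sup_apply_le le_rfl
        intro i hi
        simp [LinearMap.toSeminormFamily_apply, hx ⟨i, hi⟩]
      simpa [this] using hr
    have habs : ∀ t : ℝ, |t| * |φ x| < 1 := by
      intro t
      have := hUsub (hx0 t)
      change -1 < φ (t • x : WeakBilin B) ∧ φ (t • x : WeakBilin B) < 1 at this
      have h1 : |φ (t • x : WeakBilin B)| < 1 := abs_lt.mpr this
      have h2 : φ (t • x : WeakBilin B) = t * φ x := φ.map_smul t x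
      rw [h2, abs_mul] at h1
      exact h1
    by_contra h
    have hφx : φ x ≠ 0 := h
    have := habs (2 / |φ x|)
    rw [abs_div] at this
    have h2 : |φ x| > 0 := abs_pos.mpr hφx
    rw [abs_two, abs_abs, div_mul_cancel₀ _ (ne_of_gt h2)] at this
    norm_num at this
  have hspan := mem_span_of_iInf_ker_le_ker (𝕜 := ℝ) (L := fun i : s => B.flip (i : Y)) hker
  have hrange : ψ ∈ LinearMap.range B.flip := by
    have : Submodule.span ℝ (Set.range fun i : s => B.flip (i : Y)) ≤ LinearMap.range B.flip := by
      rw [Submodule.span_le]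
      rintro - ⟨i, rfl⟩
      exact ⟨(i : Y), rfl⟩
    exact this hspan
  obtain ⟨y, hy⟩ := hrange
  exact ⟨y, fun z => (LinearMap.congr_fun hy z).symm⟩

/-- Lemma `app-A1`, first case: `X, Y` in separating duality, `X` with the weak topology
`σ(X,Y)`; `f : X → (−∞,∞]` lower semicontinuous and convex with `dom f` contained in a
compact set; `V` closed convex with `V ∩ dom f ≠ ∅` and `inf_V f < +∞`.  Then
`inf_{x∈V} f(x) = − inf_{y∈Y} ( f*(y) + ξ_V*(−y) )`. -/
theorem stmt4 {X Y : Type*} [AddCommGroup X] [Module ℝ X] [AddCommGroup Y] [Module ℝ Y]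
    (B : X →ₗ[ℝ] Y →ₗ[ℝ] ℝ)
    (hsepX : ∀ x : X, x ≠ 0 → ∃ y : Y, B x y ≠ 0)
    (hsepY : ∀ y : Y, y ≠ 0 → ∃ x : X, B x y ≠ 0)
    (f : WeakBilin B → EReal)
    (hbot : ∀ x, f x ≠ ⊥)
    (hlsc : LowerSemicontinuous f)
    (hconv : ∀ (x₁ x₂ : WeakBilin B) (t : ℝ), 0 ≤ t → t ≤ 1 →
      f (t • x₁ + (1 - t) • x₂) ≤ (t : EReal) * f x₁ + ((1 - t : ℝ) : EReal) * f x₂)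
    (K : Set (WeakBilin B)) (hK : IsCompact K) (hdom : {x | f x ≠ ⊤} ⊆ K)
    (V : Set (WeakBilin B)) (hVcl : IsClosed V) (hVconv : Convex ℝ (V : Set (WeakBilin B)))
    (hVdom : (V ∩ {x | f x ≠ ⊤}).Nonempty)
    (hfin : (⨅ x ∈ V, f x) < ⊤) :
    (⨅ x ∈ V, f x)
      = - ⨅ y : Y, ((⨆ x : WeakBilin B, ((B x y : EReal) - f x))
          + ⨆ x ∈ V, ((B x (-y) : ℝ) : EReal)) := by
  obtain ⟨xb, hxbV, hxbdom⟩ := hVdom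
  have hxbK : xb ∈ K := hdom hxbdom
  set m : EReal := ⨅ x ∈ V, f x with hm_def
  set G : Y → EReal := fun y => (⨆ x : WeakBilin B, ((B x y : EReal) - f x))
          + ⨆ x ∈ V, ((B x (-y) : ℝ) : EReal) with hG_def
  -- a uniform real lower bound for f
  obtain ⟨c, hc⟩ : ∃ c : ℝ, ∀ x, (c : EReal) ≤ f x := by
    have hcover : K ⊆ ⋃ n : ℕ, f ⁻¹' Ioi ((-(n : ℝ) : ℝ) : EReal) := by
      intro x _
      rcases eq_or_ne (f x) ⊤ with hfx | hfx
      · exact mem_iUnion.mpr ⟨0, by simp [hfx]⟩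
      · have h1 : ((f x).toReal : EReal) = f x := EReal.coe_toReal hfx (hbot x)
        obtain ⟨n, hn⟩ := exists_nat_ge (-((f x).toReal - 1))
        refine mem_iUnion.mpr ⟨n, ?_⟩
        simp only [mem_preimage, mem_Ioi]
        calc ((-(n : ℝ) : ℝ) : EReal) ≤ (((f x).toReal - 1 : ℝ) : EReal) := by
              exact_mod_cast (by linarith : -(n : ℝ) ≤ (f x).toReal - 1)
          _ < f x := by rw [← h1]; exact_mod_cast (by linarith : (f x).toReal - 1 < (f x).toReal)
    obtain ⟨t, ht⟩ := hK.elim_finite_subcover _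
      (fun n : ℕ => hlsc.isOpen_preimage ((-(n : ℝ) : ℝ) : EReal)) hcover
    refine ⟨-((t.sup id : ℕ) : ℝ), fun x => ?_⟩
    rcases eq_or_ne (f x) ⊤ with hfx | hfx
    · simp [hfx]
    · have hxK : x ∈ K := hdom hfx
      obtain ⟨n, hn, hx⟩ := mem_iUnion₂.mp (ht hxK)
      have hle : (n : ℝ) ≤ ((t.sup id : ℕ) : ℝ) := by
        exact_mod_cast Finset.le_sup (f := id) hn
      refine le_of_lt (lt_of_le_of_lt ?_ hx)
      exact_mod_cast (by linarith : -((t.sup id : ℕ) : ℝ) ≤ -(n : ℝ))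
  have hmc : (c : EReal) ≤ m := le_iInf₂ fun x _ => hc x
  have hmbot : (⊥ : EReal) < m := lt_of_lt_of_le (EReal.bot_lt_coe c) hmc
  -- weak duality: -m ≤ G y for every y
  have hweak : ∀ y : Y, -m ≤ G y := by
    intro y
    rw [EReal.neg_le]
    refine le_iInf₂ fun x hx => ?_
    rw [EReal.neg_le]
    have h1 : (B x y : EReal) - f x ≤ ⨆ x : WeakBilin B, ((B x y : EReal) - f x) :=
      le_iSup (fun x : WeakBilin B => (B x y : EReal) - f x) x
    have h2 : ((B x (-y) : ℝ) : EReal) ≤ ⨆ x ∈ V, ((B x (-y) : ℝ) : EReal) :=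
      le_iSup₂ (f := fun x (_ : x ∈ V) => ((B x (-y) : ℝ) : EReal)) x hx
    have key : -f x ≤ ((B x y : EReal) - f x) + ((B x (-y) : ℝ) : EReal) := by
      have hBneg : (B x (-y) : ℝ) = -(B x y) := by simp
      rcases eq_or_ne (f x) ⊤ with hfx | hfx
      · simp [hfx, EReal.sub_top]
      · have h1' : ((f x).toReal : EReal) = f x := EReal.coe_toReal hfx (hbot x)
        rw [← h1', hBneg]
        norm_cast
        simp
    exact key.trans (add_le_add h1 h2)
  -- strong duality ingredient
  have hstrong : ∀ r : ℝ, (r : EReal) < m → ∃ y : Y, G y ≤ ((-r : ℝ) : EReal) := by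
    intro r hr
    classical
    set S : Set (WeakBilin B × ℝ) :=
      {p | ∃ x v, v ∈ V ∧ f x ≤ (p.2 : EReal) ∧ p.1 = x - v} with hS_def
    have hfxb : ((f xb).toReal : EReal) = f xb := EReal.coe_toReal hxbdom (hbot xb)
    set a₀ : ℝ := (f xb).toReal with ha₀_def
    have hSne : ((0 : WeakBilin B), a₀) ∈ S :=
      ⟨xb, xb, hxbV, le_of_eq hfxb.symm, (sub_self xb).symm⟩
    have hSconv : Convex ℝ S := by
      rintro p ⟨x₁, v₁, hv₁, hf₁, hp₁⟩ q ⟨x₂, v₂, hv₂, hf₂, hq₁⟩ a b ha hb hab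
      have hb' : b = 1 - a := by linarith
      refine ⟨a • x₁ + b • x₂, a • v₁ + b • v₂, hVconv hv₁ hv₂ ha hb hab, ?_, ?_⟩
      · have hf₁top : f x₁ ≠ ⊤ := (hf₁.trans_lt (EReal.coe_lt_top _)).ne
        have hf₂top : f x₂ ≠ ⊤ := (hf₂.trans_lt (EReal.coe_lt_top _)).ne
        have e₁ : ((f x₁).toReal : EReal) = f x₁ := EReal.coe_toReal hf₁top (hbot x₁)
        have e₂ : ((f x₂).toReal : EReal) = f x₂ := EReal.coe_toReal hf₂top (hbot x₂)
        have hs₁ : (f x₁).toReal ≤ p.2 := by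
          rw [← EReal.coe_le_coe_iff]; rw [e₁]; exact hf₁
        have hs₂ : (f x₂).toReal ≤ q.2 := by
          rw [← EReal.coe_le_coe_iff]; rw [e₂]; exact hf₂
        have hcv := hconv x₁ x₂ a ha (by linarith)
        rw [← hb'] at hcv
        have hsnd : (a • p + b • q).2 = a * p.2 + b * q.2 := rfl
        rw [hsnd]
        refine hcv.trans ?_
        rw [← e₁, ← e₂, ← EReal.coe_mul, ← EReal.coe_mul, ← EReal.coe_add,
          EReal.coe_le_coe_iff]
        have h1 : b * (f x₂).toReal ≤ b * q.2 := mul_le_mul_of_nonneg_left hs₂ hb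
        have h2 : a * (f x₁).toReal ≤ a * p.2 := mul_le_mul_of_nonneg_left hs₁ ha
        linarith
      · have hfst : (a • p + b • q).1 = a • p.1 + b • q.1 := rfl
        rw [hfst, hp₁, hq₁, smul_sub, smul_sub]
        abel
    -- the closed superset T
    set T : Set (WeakBilin B × ℝ) :=
      {p | ∃ x, x ∈ K ∧ x - p.1 ∈ V ∧ f x ≤ (p.2 : EReal)} with hT_def
    have hEpi : IsClosed {p : WeakBilin B × ℝ | f p.1 ≤ (p.2 : EReal)} := by
      have h1 : IsClosed {p : WeakBilin B × EReal | f p.1 ≤ p.2} := hlsc.isClosed_epigraph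
      have h2 : Continuous fun p : WeakBilin B × ℝ => (p.1, (p.2 : EReal)) :=
        continuous_fst.prodMk (continuous_coe_real_ereal.comp continuous_snd)
      exact h1.preimage h2
    have hTcl : IsClosed T := by
      haveI : CompactSpace K := isCompact_iff_compactSpace.mp hK
      have hmap : IsClosedMap (Prod.snd : K × (WeakBilin B × ℝ) → WeakBilin B × ℝ) :=
        isClosedMap_snd_of_compactSpace
      have hC : IsClosed {q : K × (WeakBilin B × ℝ) |
          (q.1 : WeakBilin B) - q.2.1 ∈ V ∧ f (q.1 : WeakBilin B) ≤ (q.2.2 : EReal)} := by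
        apply IsClosed.inter
        · exact hVcl.preimage
            ((continuous_subtype_val.comp continuous_fst).sub (continuous_fst.comp continuous_snd))
        · exact hEpi.preimage
            ((continuous_subtype_val.comp continuous_fst).prodMk
              (continuous_snd.comp continuous_snd))
      have hTeq : T = Prod.snd '' {q : K × (WeakBilin B × ℝ) |
          (q.1 : WeakBilin B) - q.2.1 ∈ V ∧ f (q.1 : WeakBilin B) ≤ (q.2.2 : EReal)} := by
        ext p
        constructor
        · rintro ⟨x, hxK, hv, hf⟩
          exact ⟨(⟨x, hxK⟩, p), ⟨hv, hf⟩, rfl⟩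
        · rintro ⟨⟨x, p'⟩, ⟨hv, hf⟩, rfl⟩
          exact ⟨(x : WeakBilin B), x.2, hv, hf⟩
      rw [hTeq]
      exact hmap _ hC
    have hsub : S ⊆ T := by
      rintro p ⟨x, v, hv, hf, hp⟩
      refine ⟨x, hdom (hf.trans_lt (EReal.coe_lt_top _)).ne, ?_, hf⟩
      rw [hp, sub_sub_cancel]
      exact hv
    have hptnot : ((0 : WeakBilin B), r) ∉ closure S := by
      intro hmem
      obtain ⟨x, hxK, hxV, hxr⟩ := closure_minimal hsub hTcl hmem
      rw [sub_zero] at hxV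
      have h1 : m ≤ f x := iInf₂_le x hxV
      exact absurd ((h1.trans hxr).trans_lt hr) (lt_irrefl _)
    obtain ⟨L, u, hLpt, hLS⟩ :=
      geometric_hahn_banach_point_closed hSconv.closure isClosed_closure hptnot
    set φ : WeakBilin B →L[ℝ] ℝ := L.comp (ContinuousLinearMap.inl ℝ (WeakBilin B) ℝ) with hφ_def
    set c : ℝ := L ((0 : WeakBilin B), (1 : ℝ)) with hc_def
    have hL : ∀ (z : WeakBilin B) (s : ℝ), L (z, s) = φ z + c * s := by
      intro z s
      have h1 : (z, s) = ((z, (0 : ℝ)) + ((0 : WeakBilin B), s)) := by simp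
      have h2 : ((0 : WeakBilin B), s) = s • ((0 : WeakBilin B), (1 : ℝ)) := by
        simp [Prod.smul_mk]
      rw [h1, map_add, h2, map_smul]
      simp only [hφ_def, ContinuousLinearMap.comp_apply, ContinuousLinearMap.inl_apply,
        smul_eq_mul, hc_def]
      ring
    have hS' : ∀ (x v : WeakBilin B) (s : ℝ), v ∈ V → f x ≤ (s : EReal) →
        u < φ (x - v) + c * s := by
      intro x v s hv hfs
      have := hLS (x - v, s) (subset_closure ⟨x, v, hv, hfs, rfl⟩)
      rwa [hL] at this
    have hcr : c * r < u := by
      have := hLpt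
      rw [hL] at this
      simpa using this
    have hc0 : 0 < c := by
      by_contra hcneg
      push_neg at hcneg
      have hlarge := hS' xb xb (max a₀ r) hxbV
        (by rw [← hfxb]; exact_mod_cast le_max_left a₀ r)
      rw [sub_self, map_zero, zero_add] at hlarge
      have h1 : c * max a₀ r ≤ c * r := mul_le_mul_of_nonpos_left (le_max_right a₀ r) hcneg
      linarith
    obtain ⟨y, hy⟩ := weakBilin_dual B ((-c⁻¹) • φ)
    have hφy : ∀ z : WeakBilin B, φ z = -c * B z y := by
      intro z
      have h1 := hy z
      rw [ContinuousLinearMap.smul_apply, smul_eq_mul] at h1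
      have hcne : c ≠ 0 := ne_of_gt hc0
      field_simp at h1
      linarith
    set D : ℝ := -(u / c) with hD_def
    have hM : ∀ (x v : WeakBilin B) (s : ℝ), v ∈ V → f x ≤ (s : EReal) →
        B v (-y) < s - B x y + D := by
      intro x v s hv hfs
      have key := hS' x v s hv hfs
      rw [hφy] at key
      have hBsub : B (x - v) y = B x y - B v y := by
        exact LinearMap.map_sub₂ B x v y
      rw [hBsub] at key
      have hBneg : B v (-y) = -(B v y) := by rw [map_neg]
      rw [hBneg, hD_def]
      have h3 : u / c < s - B x y + B v y := by
        rw [div_lt_iff₀ hc0]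
        nlinarith [key]
      linarith
    have hDr : D < -r := by
      rw [hD_def, neg_lt_neg_iff, lt_div_iff₀ hc0]
      linarith
    -- the support-function value is a real number
    set Ξ : EReal := ⨆ x ∈ V, ((B x (-y) : ℝ) : EReal) with hΞ_def
    have hΞtop : Ξ ≤ ((a₀ - B xb y + D : ℝ) : EReal) :=
      iSup₂_le fun v hv => EReal.coe_le_coe_iff.mpr
        (hM xb v a₀ hv (le_of_eq hfxb.symm)).le
    have hΞbot : ((B xb (-y) : ℝ) : EReal) ≤ Ξ :=
      le_iSup₂ (f := fun x (_ : x ∈ V) => ((B x (-y) : ℝ) : EReal)) xb hxbV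
    have hΞne_top : Ξ ≠ ⊤ := (hΞtop.trans_lt (EReal.coe_lt_top _)).ne
    have hΞne_bot : Ξ ≠ ⊥ := (lt_of_lt_of_le (EReal.bot_lt_coe _) hΞbot).ne'
    set ξ : ℝ := Ξ.toReal with hξ_def
    have hξ : (ξ : EReal) = Ξ := EReal.coe_toReal hΞne_top hΞne_bot
    have hF : (⨆ x : WeakBilin B, ((B x y : EReal) - f x)) ≤ ((D - ξ : ℝ) : EReal) := by
      refine iSup_le fun x => ?_
      rcases eq_or_ne (f x) ⊤ with hfx | hfx
      · rw [hfx, EReal.sub_top]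
        exact bot_le
      · have e : ((f x).toReal : EReal) = f x := EReal.coe_toReal hfx (hbot x)
        rw [← e, ← EReal.coe_sub, EReal.coe_le_coe_iff]
        have hΞle : Ξ ≤ (((f x).toReal - B x y + D : ℝ) : EReal) :=
          iSup₂_le fun v hv => EReal.coe_le_coe_iff.mpr
            (hM x v (f x).toReal hv (le_of_eq e.symm)).le
        rw [← hξ, EReal.coe_le_coe_iff] at hΞle
        linarith
    refine ⟨y, ?_⟩
    calc G y ≤ ((D - ξ : ℝ) : EReal) + ((ξ : ℝ) : EReal) := add_le_add hF (le_of_eq hξ.symm)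
      _ = ((D : ℝ) : EReal) := by rw [← EReal.coe_add]; norm_num
      _ ≤ ((-r : ℝ) : EReal) := EReal.coe_le_coe_iff.mpr hDr.le
  have hinf_le : (⨅ y : Y, G y) ≤ -m := by
    by_contra hlt
    push_neg at hlt
    obtain ⟨q, hq1, hq2⟩ := exists_between hlt
    have hqtop : q ≠ ⊤ := (hq2.trans_le (iInf_le _ (0 : Y))).ne_top
    have hqbot : q ≠ ⊥ := by
      have hnm : (⊥ : EReal) < -m := by
        rcases lt_or_ge ⊥ (-m) with h | h
        · exact h
        · exfalso
          have : -m = ⊥ := le_antisymm h bot_le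
          rw [EReal.neg_eq_bot_iff] at this
          exact hfin.ne this
      exact ne_of_gt (hnm.trans hq1)
    have hq : ((q.toReal : ℝ) : EReal) = q := EReal.coe_toReal hqtop hqbot
    have hrm : ((-q.toReal : ℝ) : EReal) < m := by
      rw [← EReal.neg_lt_comm] at hq1
      · rw [show ((-q.toReal : ℝ) : EReal) = -q by rw [← hq]; norm_cast]
        exact hq1
    obtain ⟨y, hy⟩ := hstrong _ hrm
    have : (⨅ y : Y, G y) ≤ q := by
      refine (iInf_le _ y).trans (hy.trans ?_)
      rw [← hq]; norm_cast; simp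
    exact absurd (hq2.trans_le this) (lt_irrefl q)
  have : (⨅ y : Y, G y) = -m := le_antisymm hinf_le (le_iInf hweak)
  rw [this, neg_neg]
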